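/- Every nonzero ideal of ℤ[i] coprime to 2 has a unique generator congruent to 1 modulo (1+i)³. -/

import Mathlib

noncomputable section
open Complex
open scoped ComplexConjugate Classical

/-- `n` is primary: `n ≡ 1 mod (1+i)^3` in `ℤ[i]`. -/
def IsPrimary (n : GaussianInt) : Prop := (⟨1, 1⟩ : GaussianInt) ^ 3 ∣ n - 1

/-- The additive character `ẽ(z) = exp(2πi (z/(2i) - z̄/(2i)))` on `ℚ(i)`. -/
def echar (z : ℂ) : ℂ :=
  Complex.exp (2 * Real.pi * I * (z / (2 * I) - (conj z) / (2 * I)))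

/-- The quartic residue symbol `(a/ϖ)₄` at a Gaussian prime `ϖ`: the unique fourth root of
unity `ζ ∈ {1, -1, i, -i}` with `a^((N(ϖ)-1)/4) ≡ ζ (mod ϖ)`, or `0` if `ϖ ∣ a`. -/
def quarticSymbolPrime (a ϖ : GaussianInt) : GaussianInt :=
  if ϖ ∣ a then 0
  else if h : ∃ ζ : GaussianInt,
      ζ ∈ ({1, -1, ⟨0, 1⟩, ⟨0, -1⟩} : Set GaussianInt) ∧
      ϖ ∣ a ^ (((Zsqrtd.norm ϖ).natAbs - 1) / 4) - ζ
    then h.choose else 0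

/-- The quartic residue symbol `(a/n)₄` for odd `n ∈ ℤ[i]`, extended multiplicatively from
Gaussian primes, with value `1` when `n` is a unit. -/
def quarticSymbol (a n : GaussianInt) : GaussianInt :=
  if n = 0 then 0
  else ((UniqueFactorizationMonoid.factors n).map fun ϖ => quarticSymbolPrime a ϖ).prod

/-- The twisted quartic Gauss sum `g(k,n) = Σ_{x mod n} (x/n)₄ ẽ(kx/n)`. -/
def gaussSumK (k n : GaussianInt) : ℂ :=
  ∑ᶠ x : GaussianInt ⧸ Ideal.span {n},
    GaussianInt.toComplex (quarticSymbol x.out n) *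
      echar (GaussianInt.toComplex k * GaussianInt.toComplex x.out / GaussianInt.toComplex n)

/-- The quartic Gauss sum `g(n) = g(1,n)`. -/
def quarticGaussSum (n : GaussianInt) : ℂ := gaussSumK 1 n


lemma primary_iff (z : GaussianInt) : IsPrimary z ↔
    (z.re % 4 = 1 ∧ z.im % 4 = 0) ∨ (z.re % 4 = 3 ∧ z.im % 4 = 2) := by
  have hcube : (⟨1, 1⟩ : GaussianInt) ^ 3 = ⟨-2, 2⟩ := by decide
  constructor
  · rintro ⟨w, hw⟩
    rw [hcube] at hw
    have h1 : z.re - 1 = -2 * w.re - 2 * w.im := by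
      have := congrArg Zsqrtd.re hw
      simpa [Zsqrtd.re_mul, Zsqrtd.im_mul, sub_eq_add_neg] using this
    have h2 : z.im = -2 * w.im + 2 * w.re := by
      have := congrArg Zsqrtd.im hw
      simpa [Zsqrtd.re_mul, Zsqrtd.im_mul] using this
    omega
  · intro h
    refine ⟨⟨-((z.re - 1) - z.im) / 4, -((z.re - 1) + z.im) / 4⟩, ?_⟩
    rw [hcube]
    ext <;> simp [Zsqrtd.re_mul, Zsqrtd.im_mul] <;> omega

lemma unit_cases {u : GaussianInt} (hu : IsUnit u) :
    u = 1 ∨ u = -1 ∨ u = ⟨0, 1⟩ ∨ u = ⟨0, -1⟩ := by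
  have hn : u.norm = 1 := (Zsqrtd.norm_eq_one_iff' (by norm_num) u).mpr hu
  rw [Zsqrtd.norm_def] at hn
  have hn' : u.re * u.re + u.im * u.im = 1 := by linarith
  have ha1 : -1 ≤ u.re := by nlinarith [mul_self_nonneg (u.re + 1), mul_self_nonneg u.im]
  have ha2 : u.re ≤ 1 := by nlinarith [mul_self_nonneg (u.re - 1), mul_self_nonneg u.im]
  have hb1 : -1 ≤ u.im := by nlinarith [mul_self_nonneg (u.im + 1), mul_self_nonneg u.re]
  have hb2 : u.im ≤ 1 := by nlinarith [mul_self_nonneg (u.im - 1), mul_self_nonneg u.re]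
  have : (u.re = 1 ∧ u.im = 0) ∨ (u.re = -1 ∧ u.im = 0) ∨
      (u.re = 0 ∧ u.im = 1) ∨ (u.re = 0 ∧ u.im = -1) := by
    interval_cases h : u.re <;> interval_cases h' : u.im <;> omega
  rcases this with ⟨h, h'⟩ | ⟨h, h'⟩ | ⟨h, h'⟩ | ⟨h, h'⟩
  · left; ext <;> simp [h, h']
  · right; left; ext <;> simp [h, h']
  · right; right; left; ext <;> simp [h, h']
  · right; right; right; ext <;> simp [h, h']

lemma isUnit_i : IsUnit (⟨0, 1⟩ : GaussianInt) :=
  IsUnit.of_mul_eq_one (⟨0, -1⟩ : GaussianInt) (by decide)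

lemma isUnit_negi : IsUnit (⟨0, -1⟩ : GaussianInt) :=
  IsUnit.of_mul_eq_one (⟨0, 1⟩ : GaussianInt) (by decide)

lemma primary_unique {g y : GaussianInt} (hg : IsPrimary g) (hy : IsPrimary y)
    (h : Associated g y) : g = y := by
  obtain ⟨v, hv⟩ := h
  rw [primary_iff] at hg hy
  rcases unit_cases v.isUnit with h' | h' | h' | h' <;> rw [h'] at hv
  · simpa using hv
  · exfalso
    have hre := congrArg Zsqrtd.re hv
    have him := congrArg Zsqrtd.im hv
    simp [Zsqrtd.re_mul, Zsqrtd.im_mul] at hre him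
    omega
  · exfalso
    have hre := congrArg Zsqrtd.re hv
    have him := congrArg Zsqrtd.im hv
    simp [Zsqrtd.re_mul, Zsqrtd.im_mul] at hre him
    omega
  · exfalso
    have hre := congrArg Zsqrtd.re hv
    have him := congrArg Zsqrtd.im hv
    simp [Zsqrtd.re_mul, Zsqrtd.im_mul] at hre him
    omega

/-- every nonzero ideal of `ℤ[i]` coprime to `2` has a unique generator
congruent to `1` modulo `(1+i)^3`. -/
theorem exists_unique_primary_generator (I : Ideal GaussianInt) (hI : I ≠ ⊥)
    (hcop : I ⊔ Ideal.span {(2 : GaussianInt)} = ⊤) :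
    ∃! g : GaussianInt, I = Ideal.span {g} ∧ IsPrimary g := by
  obtain ⟨g0, hg0⟩ := IsPrincipalIdealRing.principal I
  rw [Ideal.submodule_span_eq] at hg0
  subst hg0
  have hcop' : IsCoprime g0 2 := by
    rw [← Ideal.isCoprime_span_singleton_iff, Ideal.isCoprime_iff_sup_eq]
    exact hcop
  have hpar : g0.re % 2 ≠ g0.im % 2 := by
    intro h
    have hdvd : (⟨1, 1⟩ : GaussianInt) ∣ g0 :=
      ⟨⟨(g0.re + g0.im) / 2, (g0.im - g0.re) / 2⟩, by
        ext <;> simp [Zsqrtd.re_mul, Zsqrtd.im_mul] <;> omega⟩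
    have hdvd2 : (⟨1, 1⟩ : GaussianInt) ∣ 2 := ⟨⟨1, -1⟩, by decide⟩
    have hu := hcop'.isUnit_of_dvd' hdvd hdvd2
    have h2 := (Zsqrtd.norm_eq_one_iff' (by norm_num) _).mpr hu
    have : ((⟨1, 1⟩ : GaussianInt)).norm = 2 := by decide
    omega
  have hex : ∃ u : GaussianInt, IsUnit u ∧ IsPrimary (u * g0) := by
    have ha : g0.re % 4 = 0 ∨ g0.re % 4 = 1 ∨ g0.re % 4 = 2 ∨ g0.re % 4 = 3 := by omega
    have hb : g0.im % 4 = 0 ∨ g0.im % 4 = 1 ∨ g0.im % 4 = 2 ∨ g0.im % 4 = 3 := by omega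
    rcases ha with h1 | h1 | h1 | h1 <;> rcases hb with h2 | h2 | h2 | h2 <;>
      first
        | omega
        | (refine ⟨1, isUnit_one, ?_⟩
           rw [primary_iff]; simp [Zsqrtd.re_mul, Zsqrtd.im_mul]; omega)
        | (refine ⟨-1, isUnit_one.neg, ?_⟩
           rw [primary_iff]; simp [Zsqrtd.re_mul, Zsqrtd.im_mul]; omega)
        | (refine ⟨⟨0, 1⟩, isUnit_i, ?_⟩
           rw [primary_iff]; simp [Zsqrtd.re_mul, Zsqrtd.im_mul]; omega)
        | (refine ⟨⟨0, -1⟩, isUnit_negi, ?_⟩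
           rw [primary_iff]; simp [Zsqrtd.re_mul, Zsqrtd.im_mul]; omega)
  obtain ⟨u, hu, hprim⟩ := hex
  refine ⟨u * g0, ⟨?_, hprim⟩, ?_⟩
  · rw [Ideal.span_singleton_eq_span_singleton]
    exact ⟨hu.unit, by rw [mul_comm, hu.unit_spec]⟩
  · rintro y ⟨hspan, hprimy⟩
    have h1 : Associated g0 y := Ideal.span_singleton_eq_span_singleton.mp hspan
    have h2 : Associated g0 (u * g0) := ⟨hu.unit, by rw [mul_comm, hu.unit_spec]⟩
    have hassoc : Associated (u * g0) y := h2.symm.trans h1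
    exact (primary_unique hprim hprimy hassoc).symm
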